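/- Switch lemma between two anisotropic weighted measures: let n ≥ 2, and suppose θ₁, θ₂, θ₃, θ₄ satisfy θ₁, θ₃ > -(n-1), w₁ = |x'|^{θ₁}|x|^{θ₂} and w₂ = |x'|^{θ₃}|x|^{θ₄} are locally integrable, and θ₃ + min{0,θ₄} > 1-n. Set β = n-1+θ₃+min{0,θ₄}+max{0,θ₁-θ₃}+max{0,θ₂-θ₄} and ϑ = θ₁+θ₂-θ₃-θ₄, and let Q(ρ) = B_ρ × (-ρ^{p+ϑ}, 0] for p > 1. Then there exists C₀ = C₀(n,p,θ₁,θ₂,θ₃,θ₄) such that for any ε, ρ ∈ (0,1/2] and any measurable set Ẽ ⊂ Q(ρ), if ν_{w₁}(Ẽ)/ν_{w₁}(Q(ρ)) ≤ ε^β then ν_{w₂}(Ẽ)/ν_{w₂}(Q(ρ)) ≤ C₀ ε^{n-1+θ₃+min{0,θ₄}}. -/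

import Mathlib

open MeasureTheory

/-- The Euclidean norm of `x' = (x₁, …, x_{n-1})`, the first `n-1` coordinates of `x`. -/
noncomputable def primeNorm (n : ℕ) (x : EuclideanSpace ℝ (Fin n)) : ℝ :=
  Real.sqrt (∑ i : Fin n, if (i : ℕ) < n - 1 then x i ^ 2 else 0)

/-- The anisotropic weight `w(x) = |x'|^θ |x|^θ'`. -/
noncomputable def anisoWeight (n : ℕ) (θ θ' : ℝ) (x : EuclideanSpace ℝ (Fin n)) : ℝ :=
  primeNorm n x ^ θ * ‖x‖ ^ θ'

lemma primeNorm_nonneg (n : ℕ) (x : EuclideanSpace ℝ (Fin n)) : 0 ≤ primeNorm n x :=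
  Real.sqrt_nonneg _

lemma primeNorm_le_norm (n : ℕ) (x : EuclideanSpace ℝ (Fin n)) : primeNorm n x ≤ ‖x‖ := by
  rw [EuclideanSpace.norm_eq, primeNorm]
  apply Real.sqrt_le_sqrt
  apply Finset.sum_le_sum
  intro i _
  by_cases h : (i : ℕ) < n - 1 <;> simp [h, sq_abs] <;> positivity

lemma anisoWeight_nonneg (n : ℕ) (θ θ' : ℝ) (x : EuclideanSpace ℝ (Fin n)) :
    0 ≤ anisoWeight n θ θ' x :=
  mul_nonneg (Real.rpow_nonneg (primeNorm_nonneg n x) _) (Real.rpow_nonneg (norm_nonneg x) _)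

lemma measurable_rpow_const_of_nonneg {α : Type*} [MeasurableSpace α] {f : α → ℝ}
    (hf : Measurable f) (h0 : ∀ x, 0 ≤ f x) (θ : ℝ) : Measurable fun x => f x ^ θ := by
  have : (fun x => f x ^ θ) =
      fun x => if f x = 0 then (0:ℝ) ^ θ else Real.exp (Real.log (f x) * θ) := by
    funext x
    by_cases h : f x = 0
    · simp [h]
    · rw [if_neg h, Real.rpow_def_of_pos (lt_of_le_of_ne (h0 x) (Ne.symm h))]
  rw [this]
  exact Measurable.ite (hf (measurableSet_singleton 0)) measurable_const
    (Real.measurable_exp.comp ((Real.measurable_log.comp hf).mul_const θ))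

lemma measurable_primeNorm (n : ℕ) : Measurable (primeNorm n) := by
  apply Measurable.sqrt
  apply Finset.measurable_sum
  intro i _
  by_cases h : (i : ℕ) < n - 1
  · simpa [h] using (((measurable_pi_apply i).comp (WithLp.measurable_ofLp 2 _)).pow (measurable_const (a := (2:ℕ))))
  · simpa [h] using measurable_const

lemma measurable_anisoWeight (n : ℕ) (θ θ' : ℝ) : Measurable (anisoWeight n θ θ') :=
  (measurable_rpow_const_of_nonneg (measurable_primeNorm n) (primeNorm_nonneg n) θ).mul
    (measurable_rpow_const_of_nonneg measurable_norm (fun _ => norm_nonneg _) θ')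

lemma abs_coord_le_norm (n : ℕ) (x : EuclideanSpace ℝ (Fin n)) (i : Fin n) : |x i| ≤ ‖x‖ := by
  rw [EuclideanSpace.norm_eq, ← Real.sqrt_sq_eq_abs]
  apply Real.sqrt_le_sqrt
  calc x i ^ 2 ≤ ∑ j : Fin n, x j ^ 2 :=
        Finset.single_le_sum (f := fun j => x j ^ 2) (fun j _ => sq_nonneg _) (Finset.mem_univ i)
    _ = ∑ j : Fin n, ‖x j‖ ^ 2 := by simp [sq_abs]

variable {n : ℕ}

lemma filter_lt_eq_erase (hn : 0 < n) :
    Finset.univ.filter (fun i : Fin n => (i : ℕ) < n - 1) =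
      Finset.univ.erase (⟨n - 1, by omega⟩ : Fin n) := by
  ext i
  simp only [Finset.mem_filter, Finset.mem_univ, true_and, Finset.mem_erase, and_true]
  have hi := i.isLt
  constructor
  · intro h he
    rw [he] at h
    simp at h
  · intro h
    have : (i : ℕ) ≠ n - 1 := fun hv => h (Fin.ext hv)
    omega

lemma norm_sub_smul_single_sq (hn : 0 < n) (x : EuclideanSpace ℝ (Fin n)) (t : ℝ) :
    ‖x - t • EuclideanSpace.single (⟨n - 1, by omega⟩ : Fin n) (1:ℝ)‖ ^ 2 =
      primeNorm n x ^ 2 + (x ⟨n - 1, by omega⟩ - t) ^ 2 := by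
  set l : Fin n := ⟨n - 1, by omega⟩
  have hc : ∀ i : Fin n, (t • EuclideanSpace.single l (1:ℝ)) i = if i = l then t else 0 := by
    intro i
    by_cases h : i = l <;> simp [EuclideanSpace.single_apply, h]
  have hn1 : ‖x - t • EuclideanSpace.single l (1:ℝ)‖ ^ 2
      = ∑ i : Fin n, (x i - (if i = l then t else 0)) ^ 2 := by
    rw [EuclideanSpace.norm_eq, Real.sq_sqrt (by positivity)]
    refine Finset.sum_congr rfl fun i _ => ?_
    rw [← hc i]
    simp [sq_abs]
  rw [hn1, primeNorm, Real.sq_sqrt (by positivity)]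
  have h3 : (∑ i : Fin n, if (i:ℕ) < n - 1 then x i ^ 2 else 0)
      = ∑ i ∈ Finset.univ.erase l, x i ^ 2 := by
    rw [← Finset.sum_filter, filter_lt_eq_erase hn]
  rw [h3, ← Finset.sum_erase_add _ _ (Finset.mem_univ l)]
  have h2 : ∀ i ∈ Finset.univ.erase l, (x i - (if i = l then t else 0)) ^ 2 = x i ^ 2 := by
    intro i hi
    rw [if_neg (Finset.mem_erase.1 hi).1]
    ring
  rw [Finset.sum_congr rfl h2, if_pos rfl]

lemma setIntegral_ball_translate (f : EuclideanSpace ℝ (Fin n) → ℝ)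
    (v : EuclideanSpace ℝ (Fin n)) (hv : ∀ x, f (x + v) = f x) (R : ℝ) :
    ∫ x in Metric.ball v R, f x = ∫ x in Metric.ball 0 R, f x := by
  rw [← integral_indicator measurableSet_ball, ← integral_indicator measurableSet_ball]
  rw [← integral_add_right_eq_self ((Metric.ball v R).indicator f) v]
  congr 1
  funext x
  have hmem : x + v ∈ Metric.ball v R ↔ x ∈ Metric.ball (0 : EuclideanSpace ℝ (Fin n)) R := by
    simp [Metric.mem_ball, dist_eq_norm]
  by_cases h : x ∈ Metric.ball (0 : EuclideanSpace ℝ (Fin n)) R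
  · rw [Set.indicator_of_mem (hmem.2 h), Set.indicator_of_mem h, hv]
  · rw [Set.indicator_of_notMem (fun hc => h (hmem.1 hc)), Set.indicator_of_notMem h]

lemma integrableOn_closedBall_translate (f : EuclideanSpace ℝ (Fin n) → ℝ)
    (v : EuclideanSpace ℝ (Fin n)) (hv : ∀ x, f (x + v) = f x) (R : ℝ)
    (h : IntegrableOn f (Metric.closedBall v R)) :
    IntegrableOn f (Metric.closedBall 0 R) := by
  refine (integrable_indicator_iff measurableSet_closedBall).1 ?_
  have h2 := (integrable_indicator_iff measurableSet_closedBall).2 h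
  have h3 := h2.comp_add_right v
  convert h3 using 1
  case e'_3 => rfl
  funext x
  have hmem : x + v ∈ Metric.closedBall v R ↔
      x ∈ Metric.closedBall (0 : EuclideanSpace ℝ (Fin n)) R := by
    simp [Metric.mem_closedBall, dist_eq_norm]
  by_cases h : x ∈ Metric.closedBall (0 : EuclideanSpace ℝ (Fin n)) R
  · rw [Set.indicator_of_mem h, Set.indicator_of_mem (hmem.2 h), hv]
  · rw [Set.indicator_of_notMem h, Set.indicator_of_notMem (fun hc => h (hmem.1 hc))]

lemma setIntegral_biUnion_finset_le {ι : Type*} (t : Finset ι)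
    (s : ι → Set (EuclideanSpace ℝ (Fin n))) (f : EuclideanSpace ℝ (Fin n) → ℝ)
    (hf : ∀ x, 0 ≤ f x) (hm : ∀ i, MeasurableSet (s i))
    (hi : ∀ i, IntegrableOn f (s i) (volume)) :
    ∫ x in ⋃ i ∈ t, s i, f x ≤ ∑ i ∈ t, ∫ x in s i, f x := by
  classical
  induction t using Finset.induction_on with
  | empty => simp
  | insert a t' hat ih =>
    rw [Finset.sum_insert hat, Finset.set_biUnion_insert]
    have hU : MeasurableSet (⋃ i ∈ t', s i) :=
      Finset.measurableSet_biUnion t' (fun i _ => hm i)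
    have hUt : IntegrableOn f (⋃ i ∈ t', s i) volume :=
      integrableOn_finset_iUnion.2 (fun i _ => hi i)
    have key : ∫ x in s a ∪ ⋃ i ∈ t', s i, f x
        ≤ (∫ x in s a, f x) + ∫ x in ⋃ i ∈ t', s i, f x := by
      rw [← Set.union_diff_self, setIntegral_union disjoint_sdiff_self_right (hU.diff (hm a))
        (hi a) (hUt.mono_set Set.diff_subset)]
      refine add_le_add (le_refl _) (setIntegral_mono_set hUt ?_ Set.diff_subset.eventuallyLE)
      exact Filter.Eventually.of_forall hf
    exact key.trans (add_le_add (le_refl _) ih)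

lemma primeNorm_add_smul_single (hn : 0 < n) (x : EuclideanSpace ℝ (Fin n)) (t : ℝ) :
    primeNorm n (x + t • EuclideanSpace.single (⟨n - 1, by omega⟩ : Fin n) (1:ℝ)) =
      primeNorm n x := by
  set l : Fin n := ⟨n - 1, by omega⟩
  unfold primeNorm
  congr 1
  refine Finset.sum_congr rfl fun i _ => ?_
  by_cases h : (i : ℕ) < n - 1
  · have hil : i ≠ l := by
      intro he
      rw [he] at h
      simp [l] at h
    rw [if_pos h, if_pos h]
    have : (x + t • EuclideanSpace.single l (1:ℝ)) i = x i := by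
      have : (t • EuclideanSpace.single l (1:ℝ)) i = 0 := by
        simp [EuclideanSpace.single_apply, hil]
      simp [this]
    rw [this]
  · rw [if_neg h, if_neg h]

lemma anisoWeight_snd_zero (θ : ℝ) (x : EuclideanSpace ℝ (Fin n)) :
    anisoWeight n θ 0 x = primeNorm n x ^ θ := by
  simp [anisoWeight]

lemma anisoWeight_zero_add_smul_single (hn : 0 < n) (θ : ℝ) (x : EuclideanSpace ℝ (Fin n))
    (t : ℝ) :
    anisoWeight n θ 0 (x + t • EuclideanSpace.single (⟨n - 1, by omega⟩ : Fin n) (1:ℝ)) =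
      anisoWeight n θ 0 x := by
  rw [anisoWeight_snd_zero, anisoWeight_snd_zero, primeNorm_add_smul_single hn]

lemma locallyIntegrable_anisoWeight_zero (hn : 0 < n) {θ θ₄ : ℝ}
    (hw : LocallyIntegrable (anisoWeight n θ θ₄) volume) :
    LocallyIntegrable (anisoWeight n θ 0) volume := by
  rw [locallyIntegrable_iff]
  intro k hk
  obtain ⟨R, hR⟩ := hk.isBounded.subset_closedBall 0
  set R' : ℝ := max R 1 with hR'def
  have hR1 : (1:ℝ) ≤ R' := le_max_right _ _
  have hkR : k ⊆ Metric.closedBall 0 R' :=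
    hR.trans (Metric.closedBall_subset_closedBall (le_max_left _ _))
  refine IntegrableOn.mono_set ?_ hkR
  set v : EuclideanSpace ℝ (Fin n) :=
    (R' + 1) • EuclideanSpace.single (⟨n - 1, by omega⟩ : Fin n) (1:ℝ) with hvdef
  refine integrableOn_closedBall_translate (anisoWeight n θ 0) v
    (fun x => anisoWeight_zero_add_smul_single hn θ x (R' + 1)) R' ?_
  have hvnorm : ‖v‖ = R' + 1 := by
    rw [hvdef, norm_smul, EuclideanSpace.norm_single]
    simp
    linarith
  set m : ℝ := min 1 ((2 * R' + 1) ^ θ₄) with hmdef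
  have hm : 0 < m := by
    apply lt_min one_pos
    apply Real.rpow_pos_of_pos
    linarith
  have hbound : ∀ x ∈ Metric.closedBall v R', anisoWeight n θ 0 x
      ≤ m⁻¹ * anisoWeight n θ θ₄ x := by
    intro x hx
    have hx1 : 1 ≤ ‖x‖ := by
      have := Metric.mem_closedBall.1 hx
      have h2 : ‖v‖ - ‖x‖ ≤ dist x v := by
        rw [dist_eq_norm]
        have := norm_sub_norm_le (v) (x)
        rw [norm_sub_rev] at this
        linarith [norm_sub_norm_le v x, abs_norm_sub_norm_le v x]
      rw [hvnorm] at h2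
      linarith
    have hx2 : ‖x‖ ≤ 2 * R' + 1 := by
      have := Metric.mem_closedBall.1 hx
      calc ‖x‖ = dist x 0 := by rw [dist_zero_right]
        _ ≤ dist x v + dist v 0 := dist_triangle _ _ _
        _ ≤ R' + (R' + 1) := by
            rw [dist_zero_right, hvnorm]
            linarith
        _ = 2 * R' + 1 := by ring
    have hxm : m ≤ ‖x‖ ^ θ₄ := by
      rcases le_or_gt 0 θ₄ with h4 | h4
      · exact le_trans (min_le_left _ _) (Real.one_le_rpow hx1 h4)
      · exact le_trans (min_le_right _ _)
          (Real.rpow_le_rpow_of_nonpos (by linarith) hx2 h4.le)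
    have hP : 0 ≤ primeNorm n x ^ θ := Real.rpow_nonneg (primeNorm_nonneg n x) θ
    rw [anisoWeight, anisoWeight, Real.rpow_zero, mul_one, ← mul_assoc]
    calc primeNorm n x ^ θ = m⁻¹ * m * primeNorm n x ^ θ := by
          rw [inv_mul_cancel₀ hm.ne', one_mul]
      _ ≤ m⁻¹ * primeNorm n x ^ θ * ‖x‖ ^ θ₄ := by
          rw [mul_assoc, mul_comm m (primeNorm n x ^ θ), ← mul_assoc]
          exact mul_le_mul_of_nonneg_left hxm (by positivity)
      _ = m⁻¹ * primeNorm n x ^ θ * ‖x‖ ^ θ₄ := rfl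
  have hint : IntegrableOn (fun x => m⁻¹ * anisoWeight n θ θ₄ x)
      (Metric.closedBall v R') volume :=
    (hw.integrableOn_isCompact (isCompact_closedBall v R')).const_mul m⁻¹
  refine Integrable.mono hint
    ((measurable_anisoWeight n θ 0).aestronglyMeasurable) ?_
  refine (ae_restrict_iff' measurableSet_closedBall).2 (Filter.Eventually.of_forall ?_)
  intro x hx
  have h1 : 0 ≤ anisoWeight n θ 0 x :=
    mul_nonneg (Real.rpow_nonneg (primeNorm_nonneg n x) θ) (Real.rpow_nonneg (norm_nonneg x) 0)
  have h2 : 0 ≤ m⁻¹ * anisoWeight n θ θ₄ x :=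
    mul_nonneg (inv_nonneg.2 hm.le)
      (mul_nonneg (Real.rpow_nonneg (primeNorm_nonneg n x) θ)
        (Real.rpow_nonneg (norm_nonneg x) θ₄))
  rw [Real.norm_eq_abs, Real.norm_eq_abs, abs_of_nonneg h1, abs_of_nonneg h2]
  exact hbound x hx

set_option maxHeartbeats 2000000 in
lemma slab_bound (hn : 2 ≤ n) (θ₃ θ₄ : ℝ) (C₂ C₃ : ℝ) (hC₂pos : 0 < C₂) (hC₃pos : 0 < C₃)
    (hw₂ : LocallyIntegrable (anisoWeight n θ₃ θ₄) volume)
    (hw₃ : LocallyIntegrable (anisoWeight n θ₃ 0) volume)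
    (hC₂ : ∀ ρ' > (0:ℝ), ∫ x in Metric.ball (0 : EuclideanSpace ℝ (Fin n)) ρ',
        anisoWeight n θ₃ θ₄ x ≤ C₂ * ρ' ^ ((n:ℝ) + θ₃ + θ₄))
    (hC₃ : ∀ ρ' > (0:ℝ), ∫ x in Metric.ball (0 : EuclideanSpace ℝ (Fin n)) ρ',
        anisoWeight n θ₃ 0 x ≤ C₃ * ρ' ^ ((n:ℝ) + θ₃ + 0))
    (ε ρ : ℝ) (hε : 0 < ε) (hε2 : ε ≤ 1/2) (hρ : 0 < ρ) :
    ∫ x in {x | primeNorm n x ≤ ε * ρ} ∩ Metric.ball 0 ρ, anisoWeight n θ₃ θ₄ x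
      ≤ (5 / ε) * ((C₂ * 6 ^ ((n:ℝ) + θ₃ + θ₄) + C₃ * 2 ^ ((n:ℝ) + θ₃) * 4 ^ max 0 θ₄)
          * ε ^ ((n:ℝ) + θ₃ + min 0 θ₄) * ρ ^ ((n:ℝ) + θ₃ + θ₄)) := by
  have hn0 : 0 < n := by omega
  set r : ℝ := ε * ρ with hrdef
  have hr : 0 < r := mul_pos hε hρ
  set l : Fin n := ⟨n - 1, by omega⟩ with hldef
  set e : EuclideanSpace ℝ (Fin n) := EuclideanSpace.single l (1:ℝ) with hedef
  set K : ℤ := ⌈1/ε⌉ with hKdef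
  have hK1 : (1:ℝ)/ε ≤ (K:ℝ) := Int.le_ceil _
  have hKle : (K:ℝ) ≤ 1/ε + 1 := (Int.ceil_lt_add_one _).le
  have hεinv : (2:ℝ) ≤ 1/ε := by
    rw [le_div_iff₀ hε]; linarith
  set c : ℤ → EuclideanSpace ℝ (Fin n) := fun k => ((k:ℝ) * r) • e with hcdef
  set D₀ : ℝ := C₂ * 6 ^ ((n:ℝ) + θ₃ + θ₄) + C₃ * 2 ^ ((n:ℝ) + θ₃) * 4 ^ max 0 θ₄ with hD₀def
  set D : ℝ := D₀ * ε ^ ((n:ℝ) + θ₃ + min 0 θ₄) * ρ ^ ((n:ℝ) + θ₃ + θ₄) with hDdef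
  have hD₀pos : 0 < D₀ := by positivity
  have hDpos : 0 < D := by positivity
  have hnorme : ‖e‖ = 1 := by rw [hedef, EuclideanSpace.norm_single, norm_one]
  have hnormc : ∀ k : ℤ, ‖c k‖ = |(k:ℝ)| * r := by
    intro k
    rw [hcdef]
    simp only [norm_smul, hnorme, mul_one, Real.norm_eq_abs, abs_mul, abs_of_pos hr]
  -- the covering
  have hcover : {x | primeNorm n x ≤ r} ∩ Metric.ball 0 ρ ⊆
      ⋃ k ∈ Finset.Icc (-K) K, Metric.ball (c k) (2*r) := by
    intro x hx
    obtain ⟨hx1, hx2⟩ := hx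
    rw [Set.mem_setOf_eq] at hx1
    rw [mem_ball_zero_iff] at hx2
    set k : ℤ := ⌊x l / r⌋ with hk
    have hfl : (k:ℝ) ≤ x l / r := Int.floor_le _
    have hfl2 : x l / r < (k:ℝ) + 1 := Int.lt_floor_add_one _
    have hxl : |x l| ≤ ‖x‖ := abs_coord_le_norm n x l
    have hxρ : x l < ρ := lt_of_le_of_lt (le_abs_self _) (lt_of_le_of_lt hxl hx2)
    have hxρ' : -ρ < x l := by
      have := (abs_lt.1 (lt_of_le_of_lt hxl hx2)).1
      linarith
    have hb1 : x l / r < 1/ε := by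
      rw [div_lt_div_iff₀ hr hε]
      calc x l * ε < ρ * ε := mul_lt_mul_of_pos_right hxρ hε
        _ = 1 * r := by rw [hrdef]; ring
    have hb2 : -(1/ε) < x l / r := by
      rw [lt_div_iff₀ hr]
      have he : -(1/ε) * r = -ρ := by
        rw [hrdef, one_div, neg_mul, neg_inj, ← mul_assoc, inv_mul_cancel₀ hε.ne', one_mul]
      rw [he]; exact hxρ'
    have hkK : k ∈ Finset.Icc (-K) K := by
      rw [Finset.mem_Icc]
      constructor
      · have h1 : -(K:ℝ) - 1 < (k:ℝ) := by linarith
        have h2 : (-K - 1 : ℤ) < k := by exact_mod_cast h1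
        omega
      · have : (k:ℝ) ≤ (K:ℝ) := le_trans hfl (le_of_lt (lt_of_lt_of_le hb1 hK1))
        exact_mod_cast this
    refine Set.mem_biUnion hkK ?_
    rw [Metric.mem_ball, dist_eq_norm]
    have hck : c k = ((k:ℝ) * r) • e := rfl
    have hsq : ‖x - ((k:ℝ) * r) • e‖ ^ 2 = primeNorm n x ^ 2 + (x l - (k:ℝ)*r) ^ 2 :=
      norm_sub_smul_single_sq hn0 x ((k:ℝ)*r)
    have h1 : primeNorm n x ^ 2 ≤ r ^ 2 := pow_le_pow_left₀ (primeNorm_nonneg n x) hx1 2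
    have ha : (k:ℝ) * r ≤ x l := (le_div_iff₀ hr).1 hfl
    have hbb : x l < ((k:ℝ) + 1) * r := (div_lt_iff₀ hr).1 hfl2
    have h0' : 0 ≤ x l - (k:ℝ)*r := by linarith
    have hlt' : x l - (k:ℝ)*r < r := by linarith [hbb]
    have h2 : (x l - (k:ℝ)*r) ^ 2 < r ^ 2 := by
      have := pow_lt_pow_left₀ hlt' h0' (n := 2) two_ne_zero
      exact this
    have hsq4 : (2*r)^2 = 4*r^2 := by ring
    have hfin : ‖x - ((k:ℝ) * r) • e‖ ^ 2 < (2*r) ^ 2 := by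
      rw [hsq, hsq4]
      have hr2 : 0 ≤ r^2 := sq_nonneg r
      linarith
    have h2r : (0:ℝ) ≤ 2 * r := by linarith
    rw [hck]
    exact lt_of_pow_lt_pow_left₀ 2 h2r hfin
  -- integrability on balls
  have hintW2ball : ∀ (v : EuclideanSpace ℝ (Fin n)) (R : ℝ),
      IntegrableOn (anisoWeight n θ₃ θ₄) (Metric.ball v R) volume := fun v R =>
    (hw₂.integrableOn_isCompact (isCompact_closedBall v R)).mono_set
      Metric.ball_subset_closedBall
  have hintW3ball : ∀ (v : EuclideanSpace ℝ (Fin n)) (R : ℝ),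
      IntegrableOn (anisoWeight n θ₃ 0) (Metric.ball v R) volume := fun v R =>
    (hw₃.integrableOn_isCompact (isCompact_closedBall v R)).mono_set
      Metric.ball_subset_closedBall
  have hwpos : ∀ x, 0 ≤ anisoWeight n θ₃ θ₄ x := anisoWeight_nonneg n θ₃ θ₄
  have hminle : (n:ℝ) + θ₃ + min 0 θ₄ ≤ (n:ℝ) + θ₃ + θ₄ := by
    have := min_le_right (0:ℝ) θ₄
    linarith
  have hεle1 : ε ≤ 1 := by linarith
  -- per ball bound
  have hperball : ∀ k ∈ Finset.Icc (-K) K,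
      ∫ x in Metric.ball (c k) (2*r), anisoWeight n θ₃ θ₄ x ≤ D := by
    intro k _hk
    have h2rpos : (0:ℝ) < 2*r := by linarith
    rcases le_or_gt (|(k:ℝ)|) 4 with hk4 | hk5
    · -- small k : ball ⊆ ball 0 (6r)
      have hsub : Metric.ball (c k) (2*r) ⊆ Metric.ball (0 : EuclideanSpace ℝ (Fin n)) (6*r) := by
        intro y hy
        rw [mem_ball_zero_iff]
        have h1 : ‖y‖ ≤ ‖y - c k‖ + ‖c k‖ := by
          have := norm_add_le (y - c k) (c k)
          simpa using this
        have h2 : ‖y - c k‖ < 2*r := by rw [← dist_eq_norm]; exact hy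
        have h3 : ‖c k‖ ≤ 4*r := by
          rw [hnormc k]
          exact mul_le_mul_of_nonneg_right hk4 hr.le
        linarith
      have hεcomp : ε ^ ((n:ℝ)+θ₃+θ₄) ≤ ε ^ ((n:ℝ)+θ₃+min 0 θ₄) :=
        Real.rpow_le_rpow_of_exponent_ge hε hεle1 hminle
      have hsplit : ((6*r):ℝ) ^ ((n:ℝ)+θ₃+θ₄)
          = 6^((n:ℝ)+θ₃+θ₄) * (ε^((n:ℝ)+θ₃+θ₄) * ρ^((n:ℝ)+θ₃+θ₄)) := by
        rw [hrdef, Real.mul_rpow (by norm_num) (by positivity),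
          Real.mul_rpow hε.le hρ.le]
      calc ∫ x in Metric.ball (c k) (2*r), anisoWeight n θ₃ θ₄ x
          ≤ ∫ x in Metric.ball (0 : EuclideanSpace ℝ (Fin n)) (6*r), anisoWeight n θ₃ θ₄ x :=
            setIntegral_mono_set (hintW2ball 0 (6*r))
              (Filter.Eventually.of_forall hwpos) hsub.eventuallyLE
        _ ≤ C₂ * (6*r) ^ ((n:ℝ)+θ₃+θ₄) := hC₂ (6*r) (by linarith)
        _ = (C₂ * 6^((n:ℝ)+θ₃+θ₄)) * (ε^((n:ℝ)+θ₃+θ₄) * ρ^((n:ℝ)+θ₃+θ₄)) := by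
            rw [hsplit]; ring
        _ ≤ D₀ * (ε^((n:ℝ)+θ₃+min 0 θ₄) * ρ^((n:ℝ)+θ₃+θ₄)) := by
            apply mul_le_mul
            · rw [hD₀def]
              have : (0:ℝ) ≤ C₃ * 2 ^ ((n:ℝ) + θ₃) * 4 ^ max 0 θ₄ := by positivity
              linarith
            · exact mul_le_mul_of_nonneg_right hεcomp (by positivity)
            · positivity
            · positivity
        _ = D := by rw [hDdef]; ring
    · -- large k
      have hknorm : (4:ℝ)*r < ‖c k‖ := by
        rw [hnormc k]
        exact mul_lt_mul_of_pos_right hk5 hr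
      set L : ℝ := 4 ^ max 0 θ₄ * ε ^ min 0 θ₄ * ρ ^ θ₄ with hLdef
      have hLpos : 0 < L := by positivity
      have hpt : ∀ x ∈ Metric.ball (c k) (2*r),
          anisoWeight n θ₃ θ₄ x ≤ L * anisoWeight n θ₃ 0 x := by
        intro x hx
        rw [Metric.mem_ball, dist_eq_norm] at hx
        have hlow : r < ‖x‖ := by
          have h1 : ‖c k‖ - ‖x‖ ≤ ‖x - c k‖ := by
            have := abs_norm_sub_norm_le x (c k)
            have h2 := abs_le.1 this
            linarith [h2.1]
          have h2 : r ≤ 4*r - 2*r := by linarith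
          linarith
        have hupp : ‖x‖ ≤ 4*ρ := by
          have h1 : ‖x‖ ≤ ‖x - c k‖ + ‖c k‖ := by
            have := norm_add_le (x - c k) (c k)
            simpa using this
          have h2 : ‖c k‖ ≤ (1/ε + 1) * r := by
            rw [hnormc k]
            apply mul_le_mul_of_nonneg_right _ hr.le
            calc |(k:ℝ)| ≤ (K:ℝ) := by
                  rw [Finset.mem_Icc] at _hk
                  rw [abs_le]
                  constructor
                  · have := _hk.1
                    have : -(K:ℝ) ≤ (k:ℝ) := by exact_mod_cast this
                    linarith
                  · exact_mod_cast _hk.2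
              _ ≤ 1/ε + 1 := hKle
          have h3 : (1/ε + 1) * r + 2*r ≤ 4*ρ := by
            rw [hrdef]
            have he1 : (1/ε) * (ε * ρ) = ρ := by
              rw [one_div, ← mul_assoc, inv_mul_cancel₀ hε.ne', one_mul]
            have he2 : ε * ρ ≤ ρ := by
              have := mul_le_mul_of_nonneg_right hεle1 hρ.le
              linarith
            linarith [he1, he2]
          linarith
        have hxpos : 0 < ‖x‖ := lt_trans hr hlow
        have hnb : ‖x‖ ^ θ₄ ≤ L := by
          rcases le_or_gt 0 θ₄ with h4 | h4
          · have hmax : max 0 θ₄ = θ₄ := max_eq_right h4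
            have hmin : min 0 θ₄ = 0 := min_eq_left h4
            rw [hLdef, hmax, hmin, Real.rpow_zero, mul_one]
            calc ‖x‖ ^ θ₄ ≤ (4*ρ) ^ θ₄ := Real.rpow_le_rpow (norm_nonneg x) hupp h4
              _ = 4 ^ θ₄ * ρ ^ θ₄ := Real.mul_rpow (by norm_num) hρ.le
          · have hmax : max 0 θ₄ = 0 := max_eq_left h4.le
            have hmin : min 0 θ₄ = θ₄ := min_eq_right h4.le
            rw [hLdef, hmax, hmin, Real.rpow_zero, one_mul]
            calc ‖x‖ ^ θ₄ ≤ r ^ θ₄ := Real.rpow_le_rpow_of_nonpos hr hlow.le h4.le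
              _ = ε ^ θ₄ * ρ ^ θ₄ := by rw [hrdef, Real.mul_rpow hε.le hρ.le]
        have hP : 0 ≤ primeNorm n x ^ θ₃ := Real.rpow_nonneg (primeNorm_nonneg n x) θ₃
        calc anisoWeight n θ₃ θ₄ x = primeNorm n x ^ θ₃ * ‖x‖ ^ θ₄ := rfl
          _ ≤ primeNorm n x ^ θ₃ * L := mul_le_mul_of_nonneg_left hnb hP
          _ = L * (primeNorm n x ^ θ₃ * ‖x‖ ^ (0:ℝ)) := by
              rw [Real.rpow_zero, mul_one]; ring
          _ = L * anisoWeight n θ₃ 0 x := rfl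
      have htrans : ∫ x in Metric.ball (c k) (2*r), anisoWeight n θ₃ 0 x
          = ∫ x in Metric.ball (0 : EuclideanSpace ℝ (Fin n)) (2*r), anisoWeight n θ₃ 0 x := by
        have hck : c k = ((k:ℝ) * r) • e := rfl
        rw [hck, hedef, hldef]
        exact setIntegral_ball_translate (anisoWeight n θ₃ 0) _
          (fun x => anisoWeight_zero_add_smul_single hn0 θ₃ x ((k:ℝ)*r)) (2*r)
      have hf3pos : 0 ≤ ∫ x in Metric.ball (0 : EuclideanSpace ℝ (Fin n)) (2*r),
          anisoWeight n θ₃ 0 x :=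
        setIntegral_nonneg measurableSet_ball (fun x _ => anisoWeight_nonneg n θ₃ 0 x)
      have hsplit2 : ((2*r):ℝ) ^ ((n:ℝ)+θ₃+0)
          = 2^((n:ℝ)+θ₃) * (ε^((n:ℝ)+θ₃) * ρ^((n:ℝ)+θ₃)) := by
        rw [add_zero, hrdef, Real.mul_rpow (by norm_num) (by positivity),
          Real.mul_rpow hε.le hρ.le]
      calc ∫ x in Metric.ball (c k) (2*r), anisoWeight n θ₃ θ₄ x
          ≤ ∫ x in Metric.ball (c k) (2*r), L * anisoWeight n θ₃ 0 x :=
            setIntegral_mono_on (hintW2ball _ _) ((hintW3ball _ _).const_mul L)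
              measurableSet_ball hpt
        _ = L * ∫ x in Metric.ball (c k) (2*r), anisoWeight n θ₃ 0 x :=
            integral_const_mul L _
        _ = L * ∫ x in Metric.ball (0 : EuclideanSpace ℝ (Fin n)) (2*r),
              anisoWeight n θ₃ 0 x := by rw [htrans]
        _ ≤ L * (C₃ * (2*r) ^ ((n:ℝ)+θ₃+0)) :=
            mul_le_mul_of_nonneg_left (hC₃ (2*r) h2rpos) hLpos.le
        _ = (C₃ * 2^((n:ℝ)+θ₃) * 4 ^ max 0 θ₄)
              * (ε ^ min 0 θ₄ * ε^((n:ℝ)+θ₃)) * (ρ ^ θ₄ * ρ^((n:ℝ)+θ₃)) := by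
            rw [hsplit2, hLdef]; ring
        _ = (C₃ * 2^((n:ℝ)+θ₃) * 4 ^ max 0 θ₄)
              * ε ^ ((n:ℝ)+θ₃+min 0 θ₄) * ρ ^ ((n:ℝ)+θ₃+θ₄) := by
            rw [← Real.rpow_add hε, ← Real.rpow_add hρ]
            rw [show min 0 θ₄ + ((n:ℝ)+θ₃) = (n:ℝ)+θ₃+min 0 θ₄ by ring,
              show θ₄ + ((n:ℝ)+θ₃) = (n:ℝ)+θ₃+θ₄ by ring]
        _ ≤ D := by
            rw [hDdef]
            apply mul_le_mul_of_nonneg_right _ (by positivity)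
            apply mul_le_mul_of_nonneg_right _ (by positivity)
            rw [hD₀def]
            have : (0:ℝ) ≤ C₂ * 6 ^ ((n:ℝ) + θ₃ + θ₄) := by positivity
            linarith
  -- conclusion
  have hintU : IntegrableOn (anisoWeight n θ₃ θ₄)
      (⋃ k ∈ Finset.Icc (-K) K, Metric.ball (c k) (2*r)) volume :=
    integrableOn_finset_iUnion.2 fun k _ => hintW2ball _ _
  have hcard : ((Finset.Icc (-K) K).card : ℝ) ≤ 5 / ε := by
    have hKnn : (0:ℤ) ≤ K := by
      have : (0:ℝ) ≤ (K:ℝ) := by linarith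
      exact_mod_cast this
    have hc : (Finset.Icc (-K) K).card = (2*K+1).toNat := by
      rw [Int.card_Icc]
      congr 1
      omega
    rw [hc]
    have h1 : ((2*K+1).toNat : ℝ) = 2*(K:ℝ)+1 := by
      have : ((2*K+1).toNat : ℤ) = 2*K+1 := Int.toNat_of_nonneg (by omega)
      exact_mod_cast this
    rw [h1, div_eq_mul_one_div]
    linarith
  calc ∫ x in {x | primeNorm n x ≤ ε * ρ} ∩ Metric.ball 0 ρ, anisoWeight n θ₃ θ₄ x
      ≤ ∫ x in ⋃ k ∈ Finset.Icc (-K) K, Metric.ball (c k) (2*r), anisoWeight n θ₃ θ₄ x :=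
        setIntegral_mono_set hintU (Filter.Eventually.of_forall hwpos) hcover.eventuallyLE
    _ ≤ ∑ k ∈ Finset.Icc (-K) K, ∫ x in Metric.ball (c k) (2*r), anisoWeight n θ₃ θ₄ x :=
        setIntegral_biUnion_finset_le _ _ _ hwpos (fun _ => measurableSet_ball)
          (fun k => hintW2ball _ _)
    _ ≤ ∑ _k ∈ Finset.Icc (-K) K, D := Finset.sum_le_sum (fun k hk => hperball k hk)
    _ = ((Finset.Icc (-K) K).card : ℝ) * D := by
        rw [Finset.sum_const, nsmul_eq_mul]
    _ ≤ (5 / ε) * D := mul_le_mul_of_nonneg_right hcard hDpos.le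
    _ = (5 / ε) * (D₀ * ε ^ ((n:ℝ) + θ₃ + min 0 θ₄) * ρ ^ ((n:ℝ) + θ₃ + θ₄)) := by
        rw [hDdef]

lemma rpow_le_between {ε ρ a τ : ℝ} (hε : 0 < ε) (hρ : 0 < ρ) (h1 : ε * ρ ≤ a) (h2 : a ≤ ρ) :
    a ^ τ ≤ ρ ^ τ * ε ^ min 0 τ := by
  have ha : 0 < a := lt_of_lt_of_le (mul_pos hε hρ) h1
  rcases le_or_gt 0 τ with h | h
  · rw [min_eq_left h, Real.rpow_zero, mul_one]
    exact Real.rpow_le_rpow ha.le h2 h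
  · rw [min_eq_right h.le]
    calc a ^ τ ≤ (ε*ρ) ^ τ := Real.rpow_le_rpow_of_nonpos (mul_pos hε hρ) h1 h.le
      _ = ρ ^ τ * ε ^ τ := by rw [Real.mul_rpow hε.le hρ.le]; ring

lemma rpow_collect (ρ ε : ℝ) (hρ : 0 < ρ) (hε : 0 < ε) (d₁ d₂ a m₁ m₂ b : ℝ) :
    (ρ^d₁ * ε^m₁ * (ρ^d₂ * ε^m₂)) * ε^b * ρ^a = ε^(m₁+m₂+b) * ρ^(d₁+d₂+a) := by
  rw [Real.rpow_add hε, Real.rpow_add hε, Real.rpow_add hρ, Real.rpow_add hρ]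
  ring

lemma min_zero_eq_neg_max (a b : ℝ) : min 0 (a - b) = -max 0 (b - a) := by
  rcases le_total a b with h | h
  · rw [min_eq_right (by linarith), max_eq_right (by linarith)]
    ring
  · rw [min_eq_left (by linarith), max_eq_left (by linarith)]
    ring

set_option maxHeartbeats 2000000 in
/-- Switch lemma between the space-time measures `ν_{w₁}` and `ν_{w₂}` associated with the
anisotropic weights `w₁ = |x'|^θ₁|x|^θ₂` and `w₂ = |x'|^θ₃|x|^θ₄` on the intrinsic cylinder
`Q(ρ) = B_ρ × (-ρ^{p+ϑ}, 0]` where `ϑ = θ₁+θ₂-θ₃-θ₄`: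
if `ν_{w₁}(E)/ν_{w₁}(Q(ρ)) ≤ ε^β` then `ν_{w₂}(E)/ν_{w₂}(Q(ρ)) ≤ C₀ ε^{n-1+θ₃+min{0,θ₄}}`. -/
theorem stmt6 (n : ℕ) (hn : 2 ≤ n) (p θ₁ θ₂ θ₃ θ₄ : ℝ) (hp : 1 < p)
    (hθ₁ : -((n : ℝ) - 1) < θ₁) (hθ₃ : -((n : ℝ) - 1) < θ₃)
    (hw₁ : LocallyIntegrable (anisoWeight n θ₁ θ₂) volume)
    (hw₂ : LocallyIntegrable (anisoWeight n θ₃ θ₄) volume)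
    (hmin : (1 : ℝ) - n < θ₃ + min 0 θ₄)
    (β ϑ : ℝ)
    (hβ : β = (n : ℝ) - 1 + θ₃ + min 0 θ₄ + max 0 (θ₁ - θ₃) + max 0 (θ₂ - θ₄))
    (hϑ : ϑ = θ₁ + θ₂ - θ₃ - θ₄)
    -- the two-sided ball measure bounds for anisotropic power weights, which may be assumed
    (hB : ∀ θ θ' : ℝ, LocallyIntegrable (anisoWeight n θ θ') volume →
      ∃ C > 0, ∀ ρ > (0 : ℝ),
        C⁻¹ * ρ ^ ((n : ℝ) + θ + θ')
            ≤ ∫ x in Metric.ball (0 : EuclideanSpace ℝ (Fin n)) ρ, anisoWeight n θ θ' x ∧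
        ∫ x in Metric.ball (0 : EuclideanSpace ℝ (Fin n)) ρ, anisoWeight n θ θ' x
            ≤ C * ρ ^ ((n : ℝ) + θ + θ')) :
    ∃ C₀ > 0, ∀ ε ρ : ℝ, 0 < ε → ε ≤ 1 / 2 → 0 < ρ → ρ ≤ 1 / 2 →
      ∀ E : Set (EuclideanSpace ℝ (Fin n) × ℝ), MeasurableSet E →
        E ⊆ Metric.ball (0 : EuclideanSpace ℝ (Fin n)) ρ ×ˢ Set.Ioc (-(ρ ^ (p + ϑ))) 0 →
        (∫ z in E, anisoWeight n θ₁ θ₂ z.1) /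
            (∫ z in Metric.ball (0 : EuclideanSpace ℝ (Fin n)) ρ ×ˢ Set.Ioc (-(ρ ^ (p + ϑ))) 0,
              anisoWeight n θ₁ θ₂ z.1) ≤ ε ^ β →
        (∫ z in E, anisoWeight n θ₃ θ₄ z.1) /
            (∫ z in Metric.ball (0 : EuclideanSpace ℝ (Fin n)) ρ ×ˢ Set.Ioc (-(ρ ^ (p + ϑ))) 0,
              anisoWeight n θ₃ θ₄ z.1)
          ≤ C₀ * ε ^ ((n : ℝ) - 1 + θ₃ + min 0 θ₄) := by
  obtain ⟨C₁, hC₁pos, hC₁⟩ := hB θ₁ θ₂ hw₁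
  obtain ⟨C₂, hC₂pos, hC₂⟩ := hB θ₃ θ₄ hw₂
  have hw₃ : LocallyIntegrable (anisoWeight n θ₃ 0) volume :=
    locallyIntegrable_anisoWeight_zero (by omega) hw₂
  obtain ⟨C₃, hC₃pos, hC₃⟩ := hB θ₃ 0 hw₃
  set D₀ : ℝ := C₂ * 6 ^ ((n:ℝ) + θ₃ + θ₄) + C₃ * 2 ^ ((n:ℝ) + θ₃) * 4 ^ max 0 θ₄ with hD₀
  have hD₀pos : 0 < D₀ := by positivity
  refine ⟨(5 * D₀ + C₁) * C₂, by positivity, ?_⟩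
  intro ε ρ hε hε2 hρ hρ2 E hE hEQ hratio
  set γ : ℝ := (n:ℝ) - 1 + θ₃ + min 0 θ₄ with hγ
  set B : Set (EuclideanSpace ℝ (Fin n)) := Metric.ball 0 ρ with hBdef
  set T : ℝ := ρ ^ (p + ϑ) with hTdef
  have hT : 0 < T := Real.rpow_pos_of_pos hρ _
  set J : Set ℝ := Set.Ioc (-T) 0 with hJdef
  have hεγ : 0 < ε ^ γ := Real.rpow_pos_of_pos hε _
  -- product integrability
  have prodInt : ∀ θ θ' : ℝ, LocallyIntegrable (anisoWeight n θ θ') volume →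
      IntegrableOn (fun z : EuclideanSpace ℝ (Fin n) × ℝ => anisoWeight n θ θ' z.1)
        (B ×ˢ J) volume := by
    intro θ θ' hw
    have hf : IntegrableOn (anisoWeight n θ θ') B volume :=
      (hw.integrableOn_isCompact (isCompact_closedBall 0 ρ)).mono_set
        Metric.ball_subset_closedBall
    have hg : IntegrableOn (fun _ : ℝ => (1:ℝ)) J volume := by
      refine integrableOn_const (ne_of_lt ?_)
      exact measure_Ioc_lt_top
    rw [IntegrableOn, Measure.volume_eq_prod, ← Measure.prod_restrict]
    have := Integrable.mul_prod (L := ℝ) hf hg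
    simpa using this
  -- product integral factorization
  have prodEq : ∀ (θ θ' : ℝ) (A : Set (EuclideanSpace ℝ (Fin n))),
      ∫ z in A ×ˢ J, anisoWeight n θ θ' z.1
        = (∫ x in A, anisoWeight n θ θ' x) * T := by
    intro θ θ' A
    have h1 : ∫ z in A ×ˢ J, anisoWeight n θ θ' z.1
        = ∫ z in A ×ˢ J, anisoWeight n θ θ' z.1 * (fun _ : ℝ => (1:ℝ)) z.2
          ∂((volume : Measure (EuclideanSpace ℝ (Fin n))).prod (volume : Measure ℝ)) := by
      rw [← Measure.volume_eq_prod]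
      simp
    rw [h1, setIntegral_prod_mul (μ := (volume : Measure (EuclideanSpace ℝ (Fin n))))
      (ν := (volume : Measure ℝ)) (anisoWeight n θ θ') (fun _ : ℝ => (1:ℝ)) A J]
    congr 1
    rw [setIntegral_const, hJdef]
    rw [Real.volume_real_Ioc, smul_eq_mul, mul_one]
    rw [show (0:ℝ) - -T = T by ring, max_eq_left (by linarith)]
  have hQ1 := prodEq θ₁ θ₂ B
  have hQ2 := prodEq θ₃ θ₄ B
  obtain ⟨hI1low, hI1upp⟩ := hC₁ ρ hρ
  obtain ⟨hI2low, hI2upp⟩ := hC₂ ρ hρ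
  have hρa1 : 0 < ρ ^ ((n:ℝ) + θ₁ + θ₂) := Real.rpow_pos_of_pos hρ _
  have hρa2 : 0 < ρ ^ ((n:ℝ) + θ₃ + θ₄) := Real.rpow_pos_of_pos hρ _
  have hI1pos : 0 < ∫ x in B, anisoWeight n θ₁ θ₂ x :=
    lt_of_lt_of_le (by positivity) hI1low
  have hI2pos : 0 < ∫ x in B, anisoWeight n θ₃ θ₄ x :=
    lt_of_lt_of_le (by positivity) hI2low
  have hνQ1pos : 0 < ∫ z in B ×ˢ J, anisoWeight n θ₁ θ₂ z.1 := by
    rw [hQ1]; exact mul_pos hI1pos hT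
  have hνQ2pos : 0 < ∫ z in B ×ˢ J, anisoWeight n θ₃ θ₄ z.1 := by
    rw [hQ2]; exact mul_pos hI2pos hT
  have hνE1 : ∫ z in E, anisoWeight n θ₁ θ₂ z.1
      ≤ ε ^ β * ∫ z in B ×ˢ J, anisoWeight n θ₁ θ₂ z.1 := by
    have := (div_le_iff₀ hνQ1pos).1 hratio
    linarith
  -- splitting of E
  set S : Set (EuclideanSpace ℝ (Fin n)) := {x | primeNorm n x ≤ ε * ρ} with hSdef
  have hSmeas : MeasurableSet S :=
    measurableSet_le (measurable_primeNorm n) measurable_const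
  set E₁ : Set (EuclideanSpace ℝ (Fin n) × ℝ) := E ∩ (S ×ˢ (Set.univ : Set ℝ)) with hE₁def
  set E₂ : Set (EuclideanSpace ℝ (Fin n) × ℝ) := E \ (S ×ˢ (Set.univ : Set ℝ)) with hE₂def
  have hE₂meas : MeasurableSet E₂ := hE.diff (hSmeas.prod MeasurableSet.univ)
  have hEsplit : E = E₁ ∪ E₂ := (Set.inter_union_diff E _).symm
  have hintQ1 := prodInt θ₁ θ₂ hw₁
  have hintQ2 := prodInt θ₃ θ₄ hw₂
  have hintE1w1 : IntegrableOn (fun z : EuclideanSpace ℝ (Fin n) × ℝ => anisoWeight n θ₁ θ₂ z.1)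
      E volume := hintQ1.mono_set hEQ
  have hintE2w2 : IntegrableOn (fun z : EuclideanSpace ℝ (Fin n) × ℝ => anisoWeight n θ₃ θ₄ z.1)
      E₂ volume := hintQ2.mono_set ((Set.diff_subset).trans hEQ)
  have hintE1w2 : IntegrableOn (fun z : EuclideanSpace ℝ (Fin n) × ℝ => anisoWeight n θ₃ θ₄ z.1)
      E₁ volume := hintQ2.mono_set ((Set.inter_subset_left).trans hEQ)
  have hνE2split : ∫ z in E, anisoWeight n θ₃ θ₄ z.1
      = (∫ z in E₁, anisoWeight n θ₃ θ₄ z.1) + ∫ z in E₂, anisoWeight n θ₃ θ₄ z.1 := by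
    nth_rewrite 1 [hEsplit]
    exact setIntegral_union (disjoint_sdiff_self_right.mono_left Set.inter_subset_right)
      hE₂meas hintE1w2 hintE2w2
  -- pointwise bound on E₂
  set M : ℝ := ρ^(θ₃-θ₁) * ε^(min 0 (θ₃-θ₁)) * (ρ^(θ₄-θ₂) * ε^(min 0 (θ₄-θ₂))) with hMdef
  have hMpos : 0 < M := by positivity
  have hboundE₂ : ∀ z ∈ E₂, anisoWeight n θ₃ θ₄ z.1 ≤ M * anisoWeight n θ₁ θ₂ z.1 := by
    intro z hz
    obtain ⟨hzE, hzS⟩ := hz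
    have hzQ := hEQ hzE
    have hxB : z.1 ∈ Metric.ball (0 : EuclideanSpace ℝ (Fin n)) ρ := hzQ.1
    rw [mem_ball_zero_iff] at hxB
    have hxS : ¬ (primeNorm n z.1 ≤ ε * ρ) := by
      intro hc
      exact hzS ⟨hc, Set.mem_univ _⟩
    push_neg at hxS
    have ha0 : 0 < primeNorm n z.1 := lt_trans (by positivity) hxS
    have hab : primeNorm n z.1 ≤ ‖z.1‖ := primeNorm_le_norm n z.1
    have hb0 : 0 < ‖z.1‖ := lt_of_lt_of_le ha0 hab
    have haρ : primeNorm n z.1 ≤ ρ := le_trans hab hxB.le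
    have h3 : primeNorm n z.1 ^ (θ₃ - θ₁) ≤ ρ^(θ₃-θ₁) * ε^(min 0 (θ₃-θ₁)) :=
      rpow_le_between hε hρ hxS.le haρ
    have h4 : ‖z.1‖ ^ (θ₄ - θ₂) ≤ ρ^(θ₄-θ₂) * ε^(min 0 (θ₄-θ₂)) :=
      rpow_le_between hε hρ (le_trans hxS.le hab) hxB.le
    have hsplit3 : primeNorm n z.1 ^ θ₃
        = primeNorm n z.1 ^ θ₁ * primeNorm n z.1 ^ (θ₃ - θ₁) := by
      rw [← Real.rpow_add ha0]
      ring_nf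
    have hsplit4 : ‖z.1‖ ^ θ₄ = ‖z.1‖ ^ θ₂ * ‖z.1‖ ^ (θ₄ - θ₂) := by
      rw [← Real.rpow_add hb0]
      ring_nf
    calc anisoWeight n θ₃ θ₄ z.1
        = (primeNorm n z.1 ^ θ₁ * ‖z.1‖ ^ θ₂)
            * (primeNorm n z.1 ^ (θ₃ - θ₁) * ‖z.1‖ ^ (θ₄ - θ₂)) := by
          rw [anisoWeight, hsplit3, hsplit4]; ring
      _ ≤ (primeNorm n z.1 ^ θ₁ * ‖z.1‖ ^ θ₂)
            * ((ρ^(θ₃-θ₁) * ε^(min 0 (θ₃-θ₁))) * (ρ^(θ₄-θ₂) * ε^(min 0 (θ₄-θ₂)))) := by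
          apply mul_le_mul_of_nonneg_left _ (by positivity)
          apply mul_le_mul h3 h4 (Real.rpow_nonneg hb0.le _) (by positivity)
      _ = M * anisoWeight n θ₁ θ₂ z.1 := by
          rw [hMdef, anisoWeight]; ring
  have hνE₂bound : ∫ z in E₂, anisoWeight n θ₃ θ₄ z.1
      ≤ M * ∫ z in E, anisoWeight n θ₁ θ₂ z.1 := by
    calc ∫ z in E₂, anisoWeight n θ₃ θ₄ z.1
        ≤ ∫ z in E₂, M * anisoWeight n θ₁ θ₂ z.1 :=
          setIntegral_mono_on hintE2w2
            ((hintE1w1.mono_set Set.diff_subset).const_mul M) hE₂meas hboundE₂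
      _ = M * ∫ z in E₂, anisoWeight n θ₁ θ₂ z.1 := integral_const_mul M _
      _ ≤ M * ∫ z in E, anisoWeight n θ₁ θ₂ z.1 := by
          apply mul_le_mul_of_nonneg_left _ hMpos.le
          exact setIntegral_mono_set hintE1w1
            (Filter.Eventually.of_forall (fun z => anisoWeight_nonneg n θ₁ θ₂ z.1))
            (Set.diff_subset).eventuallyLE
  -- exponent algebra for the E₂ part
  have hsum : min 0 (θ₃-θ₁) + min 0 (θ₄-θ₂) + β = γ := by
    rw [min_zero_eq_neg_max θ₃ θ₁, min_zero_eq_neg_max θ₄ θ₂, hβ, hγ]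
    ring
  have hMalg : M * ε^β * ρ^((n:ℝ)+θ₁+θ₂) = ε^γ * ρ^((n:ℝ)+θ₃+θ₄) := by
    rw [hMdef, rpow_collect ρ ε hρ hε (θ₃-θ₁) (θ₄-θ₂) ((n:ℝ)+θ₁+θ₂)
      (min 0 (θ₃-θ₁)) (min 0 (θ₄-θ₂)) β, hsum,
      show (θ₃-θ₁)+(θ₄-θ₂)+((n:ℝ)+θ₁+θ₂) = (n:ℝ)+θ₃+θ₄ by ring]
  have hνQ1upp : ∫ z in B ×ˢ J, anisoWeight n θ₁ θ₂ z.1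
      ≤ C₁ * ρ^((n:ℝ)+θ₁+θ₂) * T := by
    rw [hQ1]
    exact mul_le_mul_of_nonneg_right hI1upp hT.le
  have hεβ : 0 ≤ ε^β := (Real.rpow_pos_of_pos hε β).le
  have hE₂final : ∫ z in E₂, anisoWeight n θ₃ θ₄ z.1
      ≤ C₁ * (ε^γ * ρ^((n:ℝ)+θ₃+θ₄)) * T := by
    calc ∫ z in E₂, anisoWeight n θ₃ θ₄ z.1
        ≤ M * ∫ z in E, anisoWeight n θ₁ θ₂ z.1 := hνE₂bound
      _ ≤ M * (ε ^ β * ∫ z in B ×ˢ J, anisoWeight n θ₁ θ₂ z.1) :=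
          mul_le_mul_of_nonneg_left hνE1 hMpos.le
      _ ≤ M * (ε ^ β * (C₁ * ρ^((n:ℝ)+θ₁+θ₂) * T)) := by
          apply mul_le_mul_of_nonneg_left _ hMpos.le
          exact mul_le_mul_of_nonneg_left hνQ1upp hεβ
      _ = (M * ε^β * ρ^((n:ℝ)+θ₁+θ₂)) * (C₁ * T) := by ring
      _ = C₁ * (ε^γ * ρ^((n:ℝ)+θ₃+θ₄)) * T := by rw [hMalg]; ring
  -- the E₁ part via the slab bound
  have hE₁sub : E₁ ⊆ (S ∩ B) ×ˢ J := by
    intro z hz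
    obtain ⟨hzE, hzS⟩ := hz
    have hzQ := hEQ hzE
    exact ⟨⟨hzS.1, hzQ.1⟩, hzQ.2⟩
  have hslab := slab_bound hn θ₃ θ₄ C₂ C₃ hC₂pos hC₃pos hw₂ hw₃
    (fun ρ' h => (hC₂ ρ' h).2) (fun ρ' h => (hC₃ ρ' h).2) ε ρ hε hε2 hρ
  have hεsplit : ε ^ ((n:ℝ)+θ₃+min 0 θ₄) = ε^γ * ε := by
    rw [show (n:ℝ)+θ₃+min 0 θ₄ = γ + 1 by rw [hγ]; ring, Real.rpow_add hε, Real.rpow_one]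
  have hslab' : ∫ x in S ∩ B, anisoWeight n θ₃ θ₄ x
      ≤ 5 * D₀ * ε^γ * ρ^((n:ℝ)+θ₃+θ₄) := by
    calc ∫ x in S ∩ B, anisoWeight n θ₃ θ₄ x
        ≤ (5 / ε) * (D₀ * ε ^ ((n:ℝ) + θ₃ + min 0 θ₄) * ρ ^ ((n:ℝ) + θ₃ + θ₄)) := hslab
      _ = 5 * D₀ * ε^γ * ρ^((n:ℝ)+θ₃+θ₄) := by
          rw [hεsplit]
          field_simp
  have hE₁final : ∫ z in E₁, anisoWeight n θ₃ θ₄ z.1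
      ≤ 5 * D₀ * ε^γ * ρ^((n:ℝ)+θ₃+θ₄) * T := by
    calc ∫ z in E₁, anisoWeight n θ₃ θ₄ z.1
        ≤ ∫ z in (S ∩ B) ×ˢ J, anisoWeight n θ₃ θ₄ z.1 :=
          setIntegral_mono_set
            (hintQ2.mono_set (Set.prod_mono_left Set.inter_subset_right))
            (Filter.Eventually.of_forall (fun z => anisoWeight_nonneg n θ₃ θ₄ z.1))
            hE₁sub.eventuallyLE
      _ = (∫ x in S ∩ B, anisoWeight n θ₃ θ₄ x) * T := prodEq θ₃ θ₄ (S ∩ B)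
      _ ≤ 5 * D₀ * ε^γ * ρ^((n:ℝ)+θ₃+θ₄) * T :=
          mul_le_mul_of_nonneg_right hslab' hT.le
  -- measure of Q from below
  have hQ2low : ρ^((n:ℝ)+θ₃+θ₄) * T ≤ C₂ * ∫ z in B ×ˢ J, anisoWeight n θ₃ θ₄ z.1 := by
    rw [hQ2]
    have h1 : ρ^((n:ℝ)+θ₃+θ₄) ≤ C₂ * ∫ x in B, anisoWeight n θ₃ θ₄ x := by
      have := mul_le_mul_of_nonneg_left hI2low hC₂pos.le
      rw [← mul_assoc, mul_inv_cancel₀ hC₂pos.ne', one_mul] at this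
      exact this
    calc ρ^((n:ℝ)+θ₃+θ₄) * T ≤ (C₂ * ∫ x in B, anisoWeight n θ₃ θ₄ x) * T :=
          mul_le_mul_of_nonneg_right h1 hT.le
      _ = C₂ * ((∫ x in B, anisoWeight n θ₃ θ₄ x) * T) := by ring
  -- conclusion
  rw [div_le_iff₀ hνQ2pos]
  calc ∫ z in E, anisoWeight n θ₃ θ₄ z.1
      = (∫ z in E₁, anisoWeight n θ₃ θ₄ z.1) + ∫ z in E₂, anisoWeight n θ₃ θ₄ z.1 :=
        hνE2split
    _ ≤ 5 * D₀ * ε^γ * ρ^((n:ℝ)+θ₃+θ₄) * T + C₁ * (ε^γ * ρ^((n:ℝ)+θ₃+θ₄)) * T :=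
        add_le_add hE₁final hE₂final
    _ = (5 * D₀ + C₁) * ε^γ * (ρ^((n:ℝ)+θ₃+θ₄) * T) := by ring
    _ ≤ (5 * D₀ + C₁) * ε^γ * (C₂ * ∫ z in B ×ˢ J, anisoWeight n θ₃ θ₄ z.1) := by
        apply mul_le_mul_of_nonneg_left hQ2low (by positivity)
    _ = (5 * D₀ + C₁) * C₂ * ε^γ * ∫ z in B ×ˢ J, anisoWeight n θ₃ θ₄ z.1 := by ring
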